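/- Let (M, Δ_M) be a right C-comodule which is injective, in the sense that there exists a homomorphism of right C-comodules r : M ⊗ C → M (where M ⊗ C is the cofree comodule with coaction id_M ⊗ Δ) such that r ∘ Δ_M = id_M. Let V be a k-vector space and equip Hom_k(M,V) with the contra-action θ(Φ)(m) = Φ(m₍₁₎)(m₍₀₎). Then the maps s : Hom_k(M,V) → Hom_k(C, Hom_k(M,V)) given by s(f)(c)(m) = f(r(m ⊗ c)), and p : Hom_k(C, Hom_k(M,V)) → Hom_k(M,V) given by p(Ψ)(m) = Ψ(m₍₁₎)(m₍₀₎), are homomorphisms of C-contramodules (with the free contramodule structure on Hom_k(C, Hom_k(M,V))) satisfying p ∘ s = id; hence (Hom_k(M,V), θ) is a retract of a free C-contramodule. -/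

import Mathlib

/-!
STATEMENT 4: If (M, Δ_M) is an injective right C-comodule (the coaction splits by a comodule
map r : M ⊗ C → M), then for any vector space V the contramodule (Hom_k(M,V), θ) with
θ(Φ)(m) = Φ(m₍₁₎)(m₍₀₎) is a retract of the free contramodule Hom_k(C, Hom_k(M,V)):
s(f)(c)(m) = f(r(m ⊗ c)) and p(Ψ)(m) = Ψ(m₍₁₎)(m₍₀₎) are contramodule homomorphisms
with p ∘ s = id.
-/

open TensorProduct LinearMap

noncomputable section

def IsContramodule (k : Type*) [Field k]
    (C : Type*) [AddCommGroup C] [Module k C] [Coalgebra k C]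
    {B : Type*} [AddCommGroup B] [Module k B]
    (θ : (C →ₗ[k] B) →ₗ[k] B) : Prop :=
  (∀ Φ : C →ₗ[k] (C →ₗ[k] B),
      θ (θ ∘ₗ Φ) = θ ((TensorProduct.lift Φ.flip) ∘ₗ Coalgebra.comul)) ∧
  (∀ b : B, θ ((LinearMap.toSpanSingleton k B b) ∘ₗ Coalgebra.counit) = b)

def IsContraHom (k : Type*) [Field k]
    (C : Type*) [AddCommGroup C] [Module k C] [Coalgebra k C]
    {B D : Type*} [AddCommGroup B] [Module k B] [AddCommGroup D] [Module k D]
    (θB : (C →ₗ[k] B) →ₗ[k] B) (θD : (C →ₗ[k] D) →ₗ[k] D)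
    (f : B →ₗ[k] D) : Prop :=
  ∀ φ : C →ₗ[k] B, f (θB φ) = θD (f ∘ₗ φ)

def IsComodule (k : Type*) [Field k]
    (C : Type*) [AddCommGroup C] [Module k C] [Coalgebra k C]
    {M : Type*} [AddCommGroup M] [Module k M]
    (ρ : M →ₗ[k] M ⊗[k] C) : Prop :=
  ((TensorProduct.assoc k M C C).toLinearMap ∘ₗ (TensorProduct.map ρ LinearMap.id) ∘ₗ ρ
      = (TensorProduct.map LinearMap.id Coalgebra.comul) ∘ₗ ρ) ∧
  ((TensorProduct.rid k M).toLinearMap ∘ₗ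
      (TensorProduct.map LinearMap.id Coalgebra.counit) ∘ₗ ρ = LinearMap.id)

/-- The free contra-action on `Hom_k(C,V)`: `θ_free(Φ)(c) = Φ(c₍₂₎)(c₍₁₎)`. -/
def freeContra (k : Type*) [Field k]
    (C : Type*) [AddCommGroup C] [Module k C] [Coalgebra k C]
    (V : Type*) [AddCommGroup V] [Module k V] :
    (C →ₗ[k] (C →ₗ[k] V)) →ₗ[k] (C →ₗ[k] V) :=
  (LinearMap.lcomp k V (Coalgebra.comul (R := k) (A := C))) ∘ₗ
    (TensorProduct.uncurry (RingHom.id k) C C V) ∘ₗ (LinearMap.lflip).toLinearMap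

/-- The contra-action `θ(Φ)(m) = Φ(m₍₁₎)(m₍₀₎)` on `Hom_k(M,V)`. -/
def comodContra (k : Type*) [Field k]
    (C : Type*) [AddCommGroup C] [Module k C] [Coalgebra k C]
    {M : Type*} [AddCommGroup M] [Module k M]
    (ρ : M →ₗ[k] M ⊗[k] C)
    (V : Type*) [AddCommGroup V] [Module k V] :
    (C →ₗ[k] (M →ₗ[k] V)) →ₗ[k] (M →ₗ[k] V) :=
  (LinearMap.lcomp k V ρ) ∘ₗ (TensorProduct.uncurry (RingHom.id k) M C V) ∘ₗ (LinearMap.lflip).toLinearMap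

/-- The coaction of the cofree right `C`-comodule `M ⊗ C`:
`m ⊗ c ↦ m ⊗ c₍₁₎ ⊗ c₍₂₎`. -/
def cofreeCoaction (k : Type*) [Field k]
    (C : Type*) [AddCommGroup C] [Module k C] [Coalgebra k C]
    (M : Type*) [AddCommGroup M] [Module k M] :
    (M ⊗[k] C) →ₗ[k] (M ⊗[k] C) ⊗[k] C :=
  (TensorProduct.assoc k M C C).symm.toLinearMap ∘ₗ
    (TensorProduct.map LinearMap.id Coalgebra.comul)

theorem hom_of_injective_comodule_is_retract_of_free
    (k : Type*) [Field k]
    (C : Type*) [AddCommGroup C] [Module k C] [Coalgebra k C]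
    (M : Type*) [AddCommGroup M] [Module k M]
    (ρ : M →ₗ[k] M ⊗[k] C) (hM : IsComodule k C ρ)
    -- `r` is a right `C`-comodule homomorphism splitting the coaction `ρ`:
    (r : M ⊗[k] C →ₗ[k] M)
    (hr_hom : ρ ∘ₗ r = (TensorProduct.map r LinearMap.id) ∘ₗ cofreeCoaction k C M)
    (hr_split : r ∘ₗ ρ = LinearMap.id)
    (V : Type*) [AddCommGroup V] [Module k V] :
    IsContraHom k C (comodContra k C ρ V) (freeContra k C (M →ₗ[k] V))
      ((LinearMap.lflip).toLinearMap ∘ₗ (TensorProduct.lcurry (RingHom.id k) M C V) ∘ₗ (LinearMap.lcomp k V r)) ∧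
    IsContraHom k C (freeContra k C (M →ₗ[k] V)) (comodContra k C ρ V)
      (comodContra k C ρ V) ∧
    (comodContra k C ρ V) ∘ₗ
      ((LinearMap.lflip).toLinearMap ∘ₗ (TensorProduct.lcurry (RingHom.id k) M C V) ∘ₗ (LinearMap.lcomp k V r))
      = LinearMap.id := by
  obtain ⟨hco, hcu⟩ := hM
  set σ : (M →ₗ[k] V) →ₗ[k] (C →ₗ[k] (M →ₗ[k] V)) :=
    (LinearMap.lflip).toLinearMap ∘ₗ (TensorProduct.lcurry (RingHom.id k) M C V) ∘ₗ (LinearMap.lcomp k V r) with hσ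
  have hσ_apply : ∀ (f : M →ₗ[k] V) (c : C) (m : M), σ f c m = f (r (m ⊗ₜ[k] c)) := by
    intro f c m; rfl
  have hθ_apply : ∀ (φ : C →ₗ[k] (M →ₗ[k] V)) (x : M),
      comodContra k C ρ V φ x = TensorProduct.uncurry (RingHom.id k) M C V (LinearMap.lflip (R₀ := k) φ) (ρ x) := by
    intro φ x; rfl
  have hfree_apply : ∀ (Ψ : C →ₗ[k] (C →ₗ[k] (M →ₗ[k] V))) (c : C),
      freeContra k C (M →ₗ[k] V) Ψ c
        = TensorProduct.uncurry (RingHom.id k) C C (M →ₗ[k] V) (LinearMap.lflip (R₀ := k) Ψ)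
            (Coalgebra.comul (R := k) c) := by
    intro Ψ c; rfl
  refine ⟨?_, ?_, ?_⟩
  · intro φ
    ext c m
    have key : (TensorProduct.uncurry (RingHom.id k) M C V (LinearMap.lflip (R₀ := k) φ)) ∘ₗ
        (TensorProduct.map r LinearMap.id) ∘ₗ
        (TensorProduct.assoc k M C C).symm.toLinearMap ∘ₗ
        (TensorProduct.mk k M (C ⊗[k] C) m)
        = (TensorProduct.uncurry (RingHom.id k) C C (M →ₗ[k] V) (LinearMap.lflip (R₀ := k) (σ ∘ₗ φ))).flip m := by
      apply TensorProduct.ext'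
      intro a b
      simp [hσ_apply]
    have h1 := LinearMap.congr_fun hr_hom (m ⊗ₜ[k] c)
    have h2 := LinearMap.congr_fun key (Coalgebra.comul (R := k) c)
    simp only [LinearMap.comp_apply, TensorProduct.mk_apply, LinearMap.flip_apply,
      LinearEquiv.coe_coe] at h1 h2
    have hcof : cofreeCoaction k C M (m ⊗ₜ[k] c)
        = (TensorProduct.assoc k M C C).symm (m ⊗ₜ[k] (Coalgebra.comul (R := k) c)) := rfl
    rw [hcof] at h1
    calc σ (comodContra k C ρ V φ) c m
        = TensorProduct.uncurry (RingHom.id k) M C V (LinearMap.lflip (R₀ := k) φ) (ρ (r (m ⊗ₜ[k] c))) := by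
          rw [hσ_apply, hθ_apply]
      _ = freeContra k C (M →ₗ[k] V) (σ ∘ₗ φ) c m := by
          rw [h1, hfree_apply, ← h2]
  · intro φ
    ext m
    set E : M ⊗[k] (C ⊗[k] C) →ₗ[k] V :=
      TensorProduct.uncurry (RingHom.id k) M (C ⊗[k] C) V
        (LinearMap.lflip (R₀ := k) (TensorProduct.uncurry (RingHom.id k) C C (M →ₗ[k] V) (LinearMap.lflip (R₀ := k) φ))) with hE
    have keyL : ∀ x : M,
        (TensorProduct.uncurry (RingHom.id k) C C (M →ₗ[k] V) (LinearMap.lflip (R₀ := k) φ)).flip x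
          = E ∘ₗ TensorProduct.mk k M (C ⊗[k] C) x := by
      intro x; apply TensorProduct.ext'; intro a b; simp [hE]
    have sub : ∀ c : C, TensorProduct.uncurry (RingHom.id k) M C V (LinearMap.lflip (R₀ := k) (φ c))
        = E ∘ₗ (TensorProduct.assoc k M C C).toLinearMap ∘ₗ
            ((TensorProduct.mk k (M ⊗[k] C) C).flip c) := by
      intro c; apply TensorProduct.ext'; intro x a; simp [hE]
    have keyL2 : TensorProduct.uncurry (RingHom.id k) M C V
        (LinearMap.lflip (R₀ := k) (freeContra k C (M →ₗ[k] V) φ))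
        = E ∘ₗ TensorProduct.map LinearMap.id Coalgebra.comul := by
      apply TensorProduct.ext'; intro x c
      have h := LinearMap.congr_fun (keyL x) (Coalgebra.comul (R := k) c)
      simp only [LinearMap.comp_apply, TensorProduct.mk_apply, LinearMap.flip_apply] at h ⊢
      rw [TensorProduct.map_tmul]
      simpa [hfree_apply] using h
    have keyR2 : TensorProduct.uncurry (RingHom.id k) M C V
        (LinearMap.lflip (R₀ := k) (comodContra k C ρ V ∘ₗ φ))
        = (E ∘ₗ (TensorProduct.assoc k M C C).toLinearMap) ∘ₗ
            TensorProduct.map ρ LinearMap.id := by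
      apply TensorProduct.ext'; intro x c
      have h := LinearMap.congr_fun (sub c) (ρ x)
      simp only [LinearMap.comp_apply, TensorProduct.mk_apply, LinearMap.flip_apply,
        LinearEquiv.coe_coe] at h ⊢
      rw [TensorProduct.map_tmul]
      simpa [hθ_apply] using h
    have hcom := LinearMap.congr_fun hco m
    simp only [LinearMap.comp_apply, LinearEquiv.coe_coe] at hcom
    calc comodContra k C ρ V (freeContra k C (M →ₗ[k] V) φ) m
        = TensorProduct.uncurry (RingHom.id k) M C V
            (LinearMap.lflip (R₀ := k) (freeContra k C (M →ₗ[k] V) φ)) (ρ m) := hθ_apply _ _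
      _ = E (TensorProduct.map LinearMap.id Coalgebra.comul (ρ m)) := by
          rw [keyL2]; rfl
      _ = E ((TensorProduct.assoc k M C C) (TensorProduct.map ρ LinearMap.id (ρ m))) := by
          rw [hcom]
      _ = TensorProduct.uncurry (RingHom.id k) M C V
            (LinearMap.lflip (R₀ := k) (comodContra k C ρ V ∘ₗ φ)) (ρ m) := by
          rw [keyR2]; rfl
      _ = comodContra k C ρ V (comodContra k C ρ V ∘ₗ φ) m := (hθ_apply _ _).symm
  · ext f m
    have hfr : TensorProduct.uncurry (RingHom.id k) M C V (LinearMap.lflip (R₀ := k) (σ f)) = f ∘ₗ r := by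
      apply TensorProduct.ext'; intro x c
      simp only [LinearMap.comp_apply]
      exact congrArg f rfl
    have hsplit := LinearMap.congr_fun hr_split m
    simp only [LinearMap.comp_apply, LinearMap.id_apply] at hsplit
    calc comodContra k C ρ V (σ f) m
        = TensorProduct.uncurry (RingHom.id k) M C V (LinearMap.lflip (R₀ := k) (σ f)) (ρ m) := hθ_apply _ _
      _ = f (r (ρ m)) := by rw [hfr]; rfl
      _ = f m := by rw [hsplit]
      _ = LinearMap.id (R := k) (M := M →ₗ[k] V) f m := rfl


end
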